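/- For an algebra 𝔸, a finite set S, and a subset X ⊆ A^(2^S), the |S|-dimensional congruence generated by X equals the iterated directional transitive closure of the |S|-dimensional tolerance generated by X: Θ_S(X) = tc(tol_S(X)). -/

import Mathlib

universe u v

structure Signature : Type 1 where
  ops : Type
  arity : ops → ℕ

class Alg (σ : Signature) (A : Type u) : Type u where
  interp : ∀ o : σ.ops, (Fin (σ.arity o) → A) → A

/-- A labeled `S`-dimensional cube with vertices labeled by elements of `A`. -/
abbrev Cube (S : Type v) (A : Type u) : Type (max u v) := (S → Bool) → A

section Defs

variable {A : Type u} {B : Type u} {S : Type v}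

def Quasireflexive (R : Set (B × B)) : Prop :=
  ∀ a b : B, (a, b) ∈ R → (a, a) ∈ R ∧ (b, b) ∈ R

def SymmRel (R : Set (B × B)) : Prop := ∀ a b : B, (a, b) ∈ R → (b, a) ∈ R

def TransRel (R : Set (B × B)) : Prop :=
  ∀ a b c : B, (a, b) ∈ R → (b, c) ∈ R → (a, c) ∈ R

def face [DecidableEq S] (i : S) (b : Bool) (γ : Cube S A) : Cube {x : S // x ≠ i} A :=
  fun f => γ fun j => if h : j = i then b else f ⟨j, h⟩

def facesRel [DecidableEq S] (i : S) (R : Set (Cube S A)) :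
    Set (Cube {x : S // x ≠ i} A × Cube {x : S // x ≠ i} A) :=
  {p | ∃ γ ∈ R, p = (face i false γ, face i true γ)}

def SRefl [DecidableEq S] (R : Set (Cube S A)) : Prop := ∀ i : S, Quasireflexive (facesRel i R)
def SSymm [DecidableEq S] (R : Set (Cube S A)) : Prop := ∀ i : S, SymmRel (facesRel i R)
def STrans [DecidableEq S] (R : Set (Cube S A)) : Prop := ∀ i : S, TransRel (facesRel i R)

def glue (i : S) (a b : Cube {x : S // x ≠ i} A) : Cube S A :=
  fun f => if f i then b (fun j => f j.val) else a (fun j => f j.val)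

def reflMap [DecidableEq S] (i : S) (b : Bool) (γ : Cube S A) : Cube S A :=
  glue i (face i b γ) (face i b γ)

def symMap [DecidableEq S] (i : S) (γ : Cube S A) : Cube S A :=
  glue i (face i true γ) (face i false γ)

def cut (Q : Set S) [DecidablePred (· ∈ Q)] (γ : Cube S A) :
    Cube {x : S // x ∈ Q} (Cube {x : S // x ∉ Q} A) :=
  fun f g => γ fun j => if h : j ∈ Q then f ⟨j, h⟩ else g ⟨j, h⟩

def cutProj (Q : Set S) [DecidablePred (· ∈ Q)] (R : Set (Cube S A))
    (f : {x : S // x ∈ Q} → Bool) : Set (Cube {x : S // x ∉ Q} A) :=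
  (fun γ => cut Q γ f) '' R

variable (σ : Signature)

def CompatCube [Alg σ A] (R : Set (Cube S A)) : Prop :=
  ∀ (o : σ.ops) (γ : Fin (σ.arity o) → Cube S A), (∀ k, γ k ∈ R) →
    (fun f => Alg.interp (A := A) o fun k => γ k f) ∈ R

def CompatRel [Alg σ A] (θ : Set (A × A)) : Prop :=
  ∀ (o : σ.ops) (x y : Fin (σ.arity o) → A), (∀ k, (x k, y k) ∈ θ) →
    (Alg.interp (A := A) o x, Alg.interp (A := A) o y) ∈ θ

def IsCongruence [Alg σ A] (θ : Set (A × A)) : Prop :=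
  (∀ a : A, (a, a) ∈ θ) ∧ SymmRel θ ∧ TransRel θ ∧ CompatRel σ θ

def IsTolerance [Alg σ A] [DecidableEq S] (R : Set (Cube S A)) : Prop :=
  CompatCube σ R ∧ SRefl R ∧ SSymm R

def IsHCongruence [Alg σ A] [DecidableEq S] (R : Set (Cube S A)) : Prop :=
  IsTolerance σ R ∧ STrans R

def subalgGen [Alg σ A] (X : Set (Cube S A)) : Set (Cube S A) :=
  ⋂₀ {R : Set (Cube S A) | CompatCube σ R ∧ X ⊆ R}

def tolGen [Alg σ A] [DecidableEq S] (X : Set (Cube S A)) : Set (Cube S A) :=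
  ⋂₀ {R : Set (Cube S A) | IsTolerance σ R ∧ X ⊆ R}

def congGen [Alg σ A] [DecidableEq S] (X : Set (Cube S A)) : Set (Cube S A) :=
  ⋂₀ {R : Set (Cube S A) | IsHCongruence σ R ∧ X ⊆ R}

def cubeAt (i : S) (p : A × A) : Cube S A := fun f => bif f i then p.2 else p.1

def cubeSet (i : S) (θ : Set (A × A)) : Set (Cube S A) := cubeAt i '' θ

def MRel [Alg σ A] [DecidableEq S] (θ : S → Set (A × A)) : Set (Cube S A) :=
  tolGen σ (⋃ i : S, cubeSet i (θ i))

def DeltaRel [Alg σ A] [DecidableEq S] (θ : S → Set (A × A)) : Set (Cube S A) :=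
  congGen σ (⋃ i : S, cubeSet i (θ i))

def rectRel [DecidableEq S] (θ : S → Set (A × A)) : Set (Cube S A) :=
  {γ | ∀ (i : S) (f : {x : S // x ≠ i} → Bool), (face i false γ f, face i true γ f) ∈ θ i}

def dirClosure [DecidableEq S] (i : S) (R : Set (Cube S A)) : Set (Cube S A) :=
  {γ | Relation.TransGen (fun a b : Cube {x : S // x ≠ i} A => (a, b) ∈ facesRel i R)
      (face i false γ) (face i true γ)}

def Centrality [DecidableEq S] [Fintype S] (δ : Set (A × A)) (i : S)
    (R : Set (Cube S A)) : Prop :=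
  ¬ ∃ γ ∈ R, Nat.card {f : {x : S // x ≠ i} → Bool //
      (face i false γ f, face i true γ f) ∈ δ} = 2 ^ (Fintype.card S - 1) - 1

end Defs

def finMod (n : ℕ) [NeZero n] (j : ℕ) : Fin n :=
  ⟨j % n, Nat.mod_lt _ (Nat.pos_of_ne_zero (NeZero.ne n))⟩

def tcSeq {A : Type u} {n : ℕ} [NeZero n] (Y : Set (Cube (Fin n) A)) :
    ℕ → Set (Cube (Fin n) A)
  | 0 => dirClosure (finMod n 0) Y
  | j + 1 => dirClosure (finMod n (j + 1)) (tcSeq Y j)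

def tcClosure {A : Type u} {n : ℕ} [NeZero n] (Y : Set (Cube (Fin n) A)) :
    Set (Cube (Fin n) A) := ⋃ j : ℕ, tcSeq Y j

def lastIdx (n : ℕ) [NeZero n] : Fin n :=
  ⟨n - 1, Nat.sub_lt (Nat.pos_of_ne_zero (NeZero.ne n)) Nat.one_pos⟩

def tcComm (σ : Signature) {A : Type u} [Alg σ A] (n : ℕ) [NeZero n]
    (θ : Fin n → Set (A × A)) : Set (A × A) :=
  ⋂₀ {δ : Set (A × A) | IsCongruence σ δ ∧ Centrality δ (lastIdx n) (MRel σ θ)}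

def hComm (σ : Signature) {A : Type u} [Alg σ A] (n : ℕ) [NeZero n]
    (θ : Fin n → Set (A × A)) : Set (A × A) :=
  ⋂₀ {δ : Set (A × A) | IsCongruence σ δ ∧ Centrality δ (lastIdx n) (DeltaRel σ θ)}

inductive Term (σ : Signature) (k : ℕ) : Type
  | var : Fin k → Term σ k
  | app : (o : σ.ops) → (Fin (σ.arity o) → Term σ k) → Term σ k

def Term.eval {σ : Signature} {k : ℕ} {A : Type u} [Alg σ A] :
    Term σ k → (Fin k → A) → A
  | .var i, v => v i
  | .app o ts, v => Alg.interp (A := A) o fun j => (ts j).eval v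

def IsTaylorAlg (σ : Signature) (A : Type u) [Alg σ A] : Prop :=
  ∃ (m : ℕ) (t : Term σ (m + 1)),
    (∀ a : A, t.eval (fun _ => a) = a) ∧
    ∀ e : Fin (m + 1), ∃ u v : Fin (m + 1) → Bool, u e = false ∧ v e = true ∧
      ∀ x y : A, t.eval (fun i => bif u i then y else x)
               = t.eval (fun i => bif v i then y else x)

open Classical in
noncomputable def comCube {A : Type u} (n : ℕ) (x y : A) : Cube (Fin n) A :=
  fun f => if ∀ i, f i = true then y else x

def iSupported {A : Type u} {S : Type v} [DecidableEq S] (i : S) (γ : Cube S A)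
    (x y : A) : Prop :=
  face i false γ (fun _ => true) = x ∧ face i true γ (fun _ => true) = y ∧
  ∀ f : {z : S // z ≠ i} → Bool, f ≠ (fun _ => true) →
    face i false γ f = face i true γ f

def sqCube {A : Type u} (a b c d : A) : Cube (Fin 2) A :=
  fun f => if f 0 then (if f 1 then d else c) else (if f 1 then b else a)

def lcs (σ : Signature) {A : Type u} [Alg σ A] (θ : Set (A × A)) : ℕ → Set (A × A)
  | 0 => θ
  | n + 1 => tcComm σ 2 ![θ, lcs σ θ n]

def diagRel (A : Type u) : Set (A × A) := {p : A × A | p.1 = p.2}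

section AuxStmt7

open Relation

variable {A : Type u} {S : Type v} [DecidableEq S]

lemma face_glue_false (i : S) (a b : Cube {x : S // x ≠ i} A) :
    face i false (glue i a b) = a := by
  funext f
  show (if ((fun j => if h : j = i then false else f ⟨j, h⟩) i : Bool)
      then b (fun k => (fun j => if h : j = i then false else f ⟨j, h⟩) k.val)
      else a (fun k => (fun j => if h : j = i then false else f ⟨j, h⟩) k.val)) = a f
  rw [show (fun j => if h : j = i then false else f ⟨j, h⟩) i = false from dif_pos rfl]
  simp only [Bool.false_eq_true, if_false]
  congr 1; funext k
  exact dif_neg k.prop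

lemma face_glue_true (i : S) (a b : Cube {x : S // x ≠ i} A) :
    face i true (glue i a b) = b := by
  funext f
  show (if ((fun j => if h : j = i then true else f ⟨j, h⟩) i : Bool)
      then b (fun k => (fun j => if h : j = i then true else f ⟨j, h⟩) k.val)
      else a (fun k => (fun j => if h : j = i then true else f ⟨j, h⟩) k.val)) = b f
  rw [show (fun j => if h : j = i then true else f ⟨j, h⟩) i = true from dif_pos rfl]
  simp only [if_true]
  congr 1; funext k
  exact dif_neg k.prop

lemma glue_face (i : S) (γ : Cube S A) :
    glue i (face i false γ) (face i true γ) = γ := by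
  funext f
  show (if f i then face i true γ (fun k => f k.val) else face i false γ (fun k => f k.val)) = γ f
  by_cases h : f i = true
  · rw [if_pos h]
    show γ (fun j => if hj : j = i then true else f j) = γ f
    congr 1; funext j
    by_cases hj : j = i
    · subst hj; rw [dif_pos rfl, h]
    · rw [dif_neg hj]
  · rw [if_neg h]
    rw [Bool.not_eq_true] at h
    show γ (fun j => if hj : j = i then false else f j) = γ f
    congr 1; funext j
    by_cases hj : j = i
    · subst hj; rw [dif_pos rfl, h]
    · rw [dif_neg hj]

lemma cube_eq_of_faces (i : S) {γ δ : Cube S A}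
    (h0 : face i false γ = face i false δ) (h1 : face i true γ = face i true δ) :
    γ = δ := by
  rw [← glue_face i γ, ← glue_face i δ, h0, h1]

lemma mem_facesRel_iff {i : S} {R : Set (Cube S A)} {a b : Cube {x : S // x ≠ i} A} :
    (a, b) ∈ facesRel i R ↔ glue i a b ∈ R := by
  constructor
  · rintro ⟨γ, hγ, hp⟩
    have ha : a = face i false γ := congrArg Prod.fst hp
    have hb : b = face i true γ := congrArg Prod.snd hp
    rw [ha, hb, glue_face]; exact hγ
  · intro h
    exact ⟨glue i a b, h, by rw [face_glue_false, face_glue_true]⟩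

end AuxStmt7

def pAct {A : Type u} {S : Type v} (u : S → Bool → Bool) (γ : Cube S A) : Cube S A :=
  fun f => γ (fun m => u m (f m))

section AuxStmt7b

open Relation

variable {A : Type u} {S : Type v} [DecidableEq S]

lemma face_pAct (i : S) (c : Bool) (u : S → Bool → Bool) (hu : u i c = c)
    (γ : Cube S A) :
    face i c (pAct u γ) = pAct (fun k b => u k.val b) (face i c γ) := by
  funext f
  show γ (fun m => u m (if h : m = i then c else f ⟨m, h⟩))
      = γ (fun m => if h : m = i then c else u m (f ⟨m, h⟩))
  congr 1; funext m
  by_cases hm : m = i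
  · subst hm; rw [dif_pos rfl, dif_pos rfl, hu]
  · rw [dif_neg hm, dif_neg hm]

lemma reflMap_eq_pAct (j : S) (b : Bool) (γ : Cube S A) :
    reflMap j b γ = pAct (fun m c => if m = j then b else c) γ := by
  funext g
  show (if g j then face j b γ (fun k => g k.val) else face j b γ (fun k => g k.val))
      = γ (fun m => if m = j then b else g m)
  rw [ite_self]
  show γ (fun m => if h : m = j then b else g m) = γ (fun m => if m = j then b else g m)
  congr 1

lemma symMap_eq_pAct (j : S) (γ : Cube S A) :
    symMap j γ = pAct (fun m c => if m = j then !c else c) γ := by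
  funext g
  show (if g j then face j false γ (fun k => g k.val) else face j true γ (fun k => g k.val))
      = γ (fun m => if m = j then !(g m) else g m)
  by_cases h : g j = true
  · rw [if_pos h]
    show γ (fun m => if hm : m = j then false else g m) = _
    congr 1; funext m
    by_cases hm : m = j
    · subst hm; rw [dif_pos rfl, if_pos rfl, h]; rfl
    · rw [dif_neg hm, if_neg hm]
  · rw [if_neg h]
    rw [Bool.not_eq_true] at h
    show γ (fun m => if hm : m = j then true else g m) = _
    congr 1; funext m
    by_cases hm : m = j
    · subst hm; rw [dif_pos rfl, if_pos rfl, h]; rfl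
    · rw [dif_neg hm, if_neg hm]

lemma face_reflMap_self (j : S) (b c : Bool) (γ : Cube S A) :
    face j c (reflMap j b γ) = face j b γ := by
  funext f
  show (reflMap j b γ) (fun m => if h : m = j then c else f ⟨m, h⟩) = _
  rw [reflMap_eq_pAct]
  show γ (fun m => if m = j then b else if h : m = j then c else f ⟨m, h⟩)
      = γ (fun m => if h : m = j then b else f ⟨m, h⟩)
  congr 1; funext m
  by_cases hm : m = j
  · rw [if_pos hm, dif_pos hm]
  · rw [if_neg hm, dif_neg hm, dif_neg hm]

lemma face_symMap_self (j : S) (c : Bool) (γ : Cube S A) :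
    face j c (symMap j γ) = face j (!c) γ := by
  funext f
  show (symMap j γ) (fun m => if h : m = j then c else f ⟨m, h⟩) = _
  rw [symMap_eq_pAct]
  show γ (fun m => if m = j then !((fun m' => if h : m' = j then c else f ⟨m', h⟩) m)
        else (fun m' => if h : m' = j then c else f ⟨m', h⟩) m)
      = γ (fun m => if h : m = j then !c else f ⟨m, h⟩)
  congr 1; funext m
  by_cases hm : m = j
  · simp only [if_pos hm, dif_pos hm]
  · simp only [if_neg hm, dif_neg hm]

/-- A tolerance is closed under `reflMap`. -/
lemma tol_reflMap {σ : Signature} [Alg σ A] {R : Set (Cube S A)}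
    (hR : IsTolerance σ R) {γ : Cube S A} (hγ : γ ∈ R) (j : S) (b : Bool) :
    reflMap j b γ ∈ R := by
  have h1 : (face j false γ, face j true γ) ∈ facesRel j R := ⟨γ, hγ, rfl⟩
  have h2 := hR.2.1 j _ _ h1
  have h3 : (face j b γ, face j b γ) ∈ facesRel j R := by
    cases b
    · exact h2.1
    · exact h2.2
  rw [mem_facesRel_iff] at h3
  have : glue j (face j b γ) (face j b γ) = reflMap j b γ := rfl
  rwa [this] at h3

/-- A tolerance is closed under `symMap`. -/
lemma tol_symMap {σ : Signature} [Alg σ A] {R : Set (Cube S A)}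
    (hR : IsTolerance σ R) {γ : Cube S A} (hγ : γ ∈ R) (j : S) :
    symMap j γ ∈ R := by
  have h1 : (face j false γ, face j true γ) ∈ facesRel j R := ⟨γ, hγ, rfl⟩
  have h2 := hR.2.2 j _ _ h1
  rw [mem_facesRel_iff] at h2
  have : glue j (face j true γ) (face j false γ) = symMap j γ := rfl
  rwa [this] at h2

end AuxStmt7b

section AuxStmt7c

open Relation

variable {A : Type u} {S : Type v} [DecidableEq S]

lemma transGen_first {B : Type*} {r : B → B → Prop} {a b : B}
    (h : TransGen r a b) : ∃ c, r a c := by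
  induction h with
  | single h => exact ⟨_, h⟩
  | tail _ _ ih => exact ih

lemma transGen_last {B : Type*} {r : B → B → Prop} {a b : B}
    (h : TransGen r a b) : ∃ c, r c b := by
  cases h with
  | single h => exact ⟨_, h⟩
  | tail _ h => exact ⟨_, h⟩

lemma transGen_symm {B : Type*} {r : B → B → Prop} (hs : ∀ x y, r x y → r y x)
    {a b : B} (h : TransGen r a b) : TransGen r b a := by
  induction h with
  | single h => exact TransGen.single (hs _ _ h)
  | tail _ h ih => exact TransGen.head (hs _ _ h) ih

lemma transGen_map {B : Type*} {r : B → B → Prop} (F : B → B)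
    (hF : ∀ x y, r x y → r (F x) (F y)) {a b : B} (h : TransGen r a b) :
    TransGen r (F a) (F b) := by
  induction h with
  | single h => exact TransGen.single (hF _ _ h)
  | tail _ h ih => exact TransGen.tail ih (hF _ _ h)

/-- Compatibility of the transitive closure of a quasireflexive compatible relation. -/
lemma transGen_compat {B : Type*} {r : B → B → Prop}
    (hq : ∀ x y, r x y → r x x ∧ r y y) {m : ℕ} (op : (Fin m → B) → B)
    (hop : ∀ x y : Fin m → B, (∀ k, r (x k) (y k)) → r (op x) (op y))
    (a b : Fin m → B) (h : ∀ k, TransGen r (a k) (b k)) :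
    TransGen r (op a) (op b) := by
  have haa : ∀ k, r (a k) (a k) := fun k => by
    obtain ⟨c, hc⟩ := transGen_first (h k); exact (hq _ _ hc).1
  have hbb : ∀ k, r (b k) (b k) := fun k => by
    obtain ⟨c, hc⟩ := transGen_last (h k); exact (hq _ _ hc).2
  -- single coordinate step
  have step1 : ∀ (x : Fin m → B) (k0 : Fin m) (u v : B), TransGen r u v →
      (∀ l, r (x l) (x l)) →
      TransGen r (op (Function.update x k0 u)) (op (Function.update x k0 v)) := by
    intro x k0 u v huv hx
    induction huv with
    | single h1 =>
        refine TransGen.single (hop _ _ fun l => ?_)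
        by_cases hl : l = k0
        · subst hl; simp only [Function.update_self]; exact h1
        · simp only [Function.update_of_ne hl]; exact hx l
    | tail _ h1 ih =>
        refine TransGen.tail ih (hop _ _ fun l => ?_)
        by_cases hl : l = k0
        · subst hl; simp only [Function.update_self]; exact h1
        · simp only [Function.update_of_ne hl]; exact hx l
  -- mixed tuples
  let mix : ℕ → (Fin m → B) := fun k l => if l.val < k then b l else a l
  have hmixr : ∀ k l, r (mix k l) (mix k l) := by
    intro k l
    by_cases hl : l.val < k
    · simp only [mix, if_pos hl]; exact hbb l
    · simp only [mix, if_neg hl]; exact haa l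
  have key : ∀ k, TransGen r (op a) (op (mix k)) := by
    intro k
    induction k with
    | zero =>
        have : mix 0 = a := by funext l; simp [mix]
        rw [this]; exact TransGen.single (hop a a haa)
    | succ k ih =>
        by_cases hk : k < m
        · have h1 : mix k = Function.update (mix k) ⟨k, hk⟩ (a ⟨k, hk⟩) := by
            funext l
            by_cases hl : l = ⟨k, hk⟩
            · subst hl; simp [mix, Function.update_self]
            · simp [Function.update_of_ne hl]
          have h2 : mix (k + 1) = Function.update (mix k) ⟨k, hk⟩ (b ⟨k, hk⟩) := by
            funext l
            by_cases hl : l = ⟨k, hk⟩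
            · subst hl; simp [mix]
            · have hlv : l.val ≠ k := fun hc => hl (Fin.ext hc)
              have : (l.val < k + 1) ↔ (l.val < k) := by omega
              simp [Function.update_of_ne hl, mix, this]
          have := step1 (mix k) ⟨k, hk⟩ (a ⟨k, hk⟩) (b ⟨k, hk⟩) (h ⟨k, hk⟩) (hmixr k)
          rw [← h1, ← h2] at this
          exact ih.trans this
        · have : mix (k + 1) = mix k := by
            funext l
            have h1 : l.val < k + 1 := by omega
            have h2 : l.val < k := by omega
            simp [mix, h1, h2]
          rw [this]; exact ih
  have : mix m = b := by funext l; simp [mix, l.isLt]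
  have hm := key m
  rwa [this] at hm

lemma facesRel_mono {i : S} {R R' : Set (Cube S A)} (h : R ⊆ R') :
    facesRel i R ⊆ facesRel i R' := by
  rintro p ⟨γ, hγ, hp⟩; exact ⟨γ, h hγ, hp⟩

lemma subset_dirClosure (i : S) (R : Set (Cube S A)) : R ⊆ dirClosure i R :=
  fun γ hγ => TransGen.single ⟨γ, hγ, rfl⟩

lemma mem_facesRel_dirClosure {i : S} {R : Set (Cube S A)}
    {a b : Cube {x : S // x ≠ i} A} :
    (a, b) ∈ facesRel i (dirClosure i R) ↔
      TransGen (fun x y => (x, y) ∈ facesRel i R) a b := by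
  constructor
  · rintro ⟨γ, hγ, hp⟩
    have ha : a = face i false γ := congrArg Prod.fst hp
    have hb : b = face i true γ := congrArg Prod.snd hp
    rw [ha, hb]; exact hγ
  · intro h
    refine ⟨glue i a b, ?_, by rw [face_glue_false, face_glue_true]⟩
    show TransGen _ (face i false (glue i a b)) (face i true (glue i a b))
    rwa [face_glue_false, face_glue_true]

lemma dirClosure_mono {i : S} {R R' : Set (Cube S A)} (h : R ⊆ R') :
    dirClosure i R ⊆ dirClosure i R' := fun γ hγ =>
  TransGen.mono (fun _ _ hp => facesRel_mono h hp) _ _ hγ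

/-- dirClosure is closed under pAct when R is. -/
lemma dirClosure_pAct {i : S} {R : Set (Cube S A)} (u : S → Bool → Bool)
    (hu : ∀ b, u i b = b) (hR : ∀ ρ ∈ R, pAct u ρ ∈ R)
    {γ : Cube S A} (hγ : γ ∈ dirClosure i R) : pAct u γ ∈ dirClosure i R := by
  set F : Cube {x : S // x ≠ i} A → Cube {x : S // x ≠ i} A :=
    pAct (fun k b => u k.val b) with hF
  have hstep : ∀ x y, (x, y) ∈ facesRel i R → (F x, F y) ∈ facesRel i R := by
    rintro x y ⟨ρ, hρ, hp⟩
    have hx : x = face i false ρ := congrArg Prod.fst hp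
    have hy : y = face i true ρ := congrArg Prod.snd hp
    refine ⟨pAct u ρ, hR ρ hρ, ?_⟩
    rw [hx, hy, hF]
    rw [face_pAct i false u (hu false) ρ, face_pAct i true u (hu true) ρ]
  have : TransGen (fun x y => (x, y) ∈ facesRel i R) (F (face i false γ))
      (F (face i true γ)) := transGen_map F hstep hγ
  show TransGen _ (face i false (pAct u γ)) (face i true (pAct u γ))
  rwa [face_pAct i false u (hu false) γ, face_pAct i true u (hu true) γ]

end AuxStmt7c

section AuxStmt7d

open Relation

variable {A : Type u} {S : Type v} [DecidableEq S] {σ : Signature} [Alg σ A]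

lemma face_interpCube (i : S) (c : Bool) {o : σ.ops} (δ : Fin (σ.arity o) → Cube S A) :
    face i c (fun f => Alg.interp (A := A) o fun k => δ k f)
      = fun f => Alg.interp (A := A) o fun k => face i c (δ k) f := rfl

lemma dirClosure_tolerance {R : Set (Cube S A)} (hR : IsTolerance σ R) (i : S) :
    IsTolerance σ (dirClosure i R) := by
  set r : Cube {x : S // x ≠ i} A → Cube {x : S // x ≠ i} A → Prop :=
    fun x y => (x, y) ∈ facesRel i R with hr
  have hq : ∀ x y, r x y → r x x ∧ r y y := fun x y h => hR.2.1 i x y h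
  refine ⟨?_, ?_, ?_⟩
  · -- CompatCube
    intro o γ hγ
    set op : (Fin (σ.arity o) → Cube {x : S // x ≠ i} A) → Cube {x : S // x ≠ i} A :=
      fun x f => Alg.interp (A := A) o fun k => x k f with hop'
    have hop : ∀ x y, (∀ k, r (x k) (y k)) → r (op x) (op y) := by
      intro x y hxy
      have hg : ∀ k, glue i (x k) (y k) ∈ R := fun k => mem_facesRel_iff.mp (hxy k)
      have hΓ : (fun f => Alg.interp (A := A) o fun k => glue i (x k) (y k) f) ∈ R :=
        hR.1 o _ hg
      refine ⟨_, hΓ, ?_⟩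
      rw [face_interpCube, face_interpCube]
      have hx : op x = fun f => Alg.interp (A := A) o
          fun k => face i false (glue i (x k) (y k)) f := by
        funext f; congr 1; funext k; rw [face_glue_false]
      have hy : op y = fun f => Alg.interp (A := A) o
          fun k => face i true (glue i (x k) (y k)) f := by
        funext f; congr 1; funext k; rw [face_glue_true]
      rw [← hx, ← hy]
    have := transGen_compat hq op hop (fun k => face i false (γ k))
      (fun k => face i true (γ k)) hγ
    show TransGen r (face i false _) (face i true _)
    rw [face_interpCube, face_interpCube]
    exact this
  · -- SRefl
    intro j a b hab
    by_cases hji : j = i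
    · subst hji
      rw [mem_facesRel_dirClosure] at hab
      obtain ⟨c, hc⟩ := transGen_first hab
      obtain ⟨d, hd⟩ := transGen_last hab
      constructor
      · rw [mem_facesRel_dirClosure]; exact TransGen.single (hq _ _ hc).1
      · rw [mem_facesRel_dirClosure]; exact TransGen.single (hq _ _ hd).2
    · obtain ⟨γ, hγ, hp⟩ := hab
      have hij : i ≠ j := fun h => hji h.symm
      have ha : a = face j false γ := congrArg Prod.fst hp
      have hb : b = face j true γ := congrArg Prod.snd hp
      constructor
      · refine ⟨reflMap j false γ, ?_, ?_⟩
        · rw [reflMap_eq_pAct]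
          exact dirClosure_pAct (fun m c => if m = j then false else c)
            (fun c => if_neg hij)
            (fun ρ hρ => by rw [← reflMap_eq_pAct]; exact tol_reflMap hR hρ j false) hγ
        · rw [face_reflMap_self, face_reflMap_self, ha]
      · refine ⟨reflMap j true γ, ?_, ?_⟩
        · rw [reflMap_eq_pAct]
          exact dirClosure_pAct (fun m c => if m = j then true else c)
            (fun c => if_neg hij)
            (fun ρ hρ => by rw [← reflMap_eq_pAct]; exact tol_reflMap hR hρ j true) hγ
        · rw [face_reflMap_self, face_reflMap_self, hb]
  · -- SSymm
    intro j a b hab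
    by_cases hji : j = i
    · subst hji
      rw [mem_facesRel_dirClosure] at hab ⊢
      exact transGen_symm (fun x y h => hR.2.2 j x y h) hab
    · obtain ⟨γ, hγ, hp⟩ := hab
      have hij : i ≠ j := fun h => hji h.symm
      have ha : a = face j false γ := congrArg Prod.fst hp
      have hb : b = face j true γ := congrArg Prod.snd hp
      refine ⟨symMap j γ, ?_, ?_⟩
      · rw [symMap_eq_pAct]
        exact dirClosure_pAct (fun m c => if m = j then !c else c)
          (fun c => if_neg hij)
          (fun ρ hρ => by rw [← symMap_eq_pAct]; exact tol_symMap hR hρ j) hγ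
      · rw [face_symMap_self, face_symMap_self, ha, hb]; rfl

end AuxStmt7d

section AuxStmt7e

open Relation

variable {A : Type u} {S : Type v} [DecidableEq S] {σ : Signature} [Alg σ A]

lemma subset_tolGen (X : Set (Cube S A)) : X ⊆ tolGen σ X :=
  Set.subset_sInter fun _ hR => hR.2

lemma tolGen_subset {X R : Set (Cube S A)} (hR : IsTolerance σ R) (hX : X ⊆ R) :
    tolGen σ X ⊆ R :=
  Set.sInter_subset_of_mem ⟨hR, hX⟩

lemma tolGen_tolerance (X : Set (Cube S A)) : IsTolerance σ (tolGen σ X) := by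
  refine ⟨?_, ?_, ?_⟩
  · intro o γ h
    exact Set.mem_sInter.mpr fun R hR => hR.1.1 o γ fun k => (h k) R hR
  · intro i a b hab
    obtain ⟨γ, hγ, hp⟩ := hab
    have ha : a = face i false γ := congrArg Prod.fst hp
    have hb : b = face i true γ := congrArg Prod.snd hp
    constructor
    · refine ⟨reflMap i false γ, Set.mem_sInter.mpr fun R hR =>
        tol_reflMap hR.1 (hγ R hR) i false, ?_⟩
      rw [face_reflMap_self, face_reflMap_self, ha]
    · refine ⟨reflMap i true γ, Set.mem_sInter.mpr fun R hR =>
        tol_reflMap hR.1 (hγ R hR) i true, ?_⟩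
      rw [face_reflMap_self, face_reflMap_self, hb]
  · intro i a b hab
    obtain ⟨γ, hγ, hp⟩ := hab
    have ha : a = face i false γ := congrArg Prod.fst hp
    have hb : b = face i true γ := congrArg Prod.snd hp
    refine ⟨symMap i γ, Set.mem_sInter.mpr fun R hR =>
      tol_symMap hR.1 (hγ R hR) i, ?_⟩
    rw [face_symMap_self, face_symMap_self, ha, hb]; rfl

lemma dirClosure_subset_cong {R C : Set (Cube S A)} (hRC : R ⊆ C) (hC : STrans C)
    (i : S) : dirClosure i R ⊆ C := by
  intro γ hγ
  have htr : Transitive (fun x y : Cube {x : S // x ≠ i} A => (x, y) ∈ facesRel i C) :=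
    fun x y z h1 h2 => hC i x y z h1 h2
  have h1 : TransGen (fun x y : Cube {x : S // x ≠ i} A => (x, y) ∈ facesRel i C)
      (face i false γ) (face i true γ) :=
    TransGen.mono (fun _ _ hp => facesRel_mono hRC hp) _ _ hγ
  rw [@Relation.transGen_eq_self _ _ ⟨htr⟩] at h1
  rw [mem_facesRel_iff] at h1
  rwa [glue_face] at h1

end AuxStmt7e

section AuxStmt7f

open Relation

variable {A : Type u} {σ : Signature} [Alg σ A] {n : ℕ} [NeZero n]

lemma tcSeq_succ (Y : Set (Cube (Fin n) A)) (j : ℕ) :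
    tcSeq Y (j + 1) = dirClosure (finMod n (j + 1)) (tcSeq Y j) := rfl

lemma tcSeq_mono (Y : Set (Cube (Fin n) A)) {j j' : ℕ} (h : j ≤ j') :
    tcSeq Y j ⊆ tcSeq Y j' := by
  induction j' with
  | zero => have : j = 0 := Nat.le_zero.mp h; rw [this]
  | succ j' ih =>
      rcases Nat.lt_or_ge j (j' + 1) with h1 | h1
      · exact (ih (Nat.lt_succ_iff.mp h1)).trans
          (subset_dirClosure (finMod n (j' + 1)) (tcSeq Y j'))
      · have : j = j' + 1 := le_antisymm h h1
        rw [this]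

lemma tcSeq_tolerance {Y : Set (Cube (Fin n) A)} (hY : IsTolerance σ Y) (j : ℕ) :
    IsTolerance σ (tcSeq Y j) := by
  induction j with
  | zero => exact dirClosure_tolerance hY _
  | succ j ih => exact dirClosure_tolerance ih _

lemma subset_tcClosure (Y : Set (Cube (Fin n) A)) : Y ⊆ tcClosure Y :=
  (subset_dirClosure (finMod n 0) Y).trans (Set.subset_iUnion (tcSeq Y) 0)

lemma facesRel_tcClosure_iff {Y : Set (Cube (Fin n) A)} {i : Fin n}
    {p : Cube {x : Fin n // x ≠ i} A × Cube {x : Fin n // x ≠ i} A} :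
    p ∈ facesRel i (tcClosure Y) ↔ ∃ j, p ∈ facesRel i (tcSeq Y j) := by
  constructor
  · rintro ⟨γ, hγ, hp⟩
    obtain ⟨j, hj⟩ := Set.mem_iUnion.mp hγ
    exact ⟨j, γ, hj, hp⟩
  · rintro ⟨j, hp⟩
    exact facesRel_mono (Set.subset_iUnion (tcSeq Y) j) hp

lemma tcClosure_tolerance {Y : Set (Cube (Fin n) A)} (hY : IsTolerance σ Y) :
    IsTolerance σ (tcClosure Y) := by
  refine ⟨?_, ?_, ?_⟩
  · intro o γ h
    have h' : ∀ k, ∃ j, γ k ∈ tcSeq Y j := fun k => Set.mem_iUnion.mp (h k)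
    choose js hjs using h'
    set J := Finset.univ.sup js with hJ
    have hall : ∀ k, γ k ∈ tcSeq Y J := fun k =>
      tcSeq_mono Y (Finset.le_sup (Finset.mem_univ k)) (hjs k)
    exact Set.mem_iUnion.mpr ⟨J, (tcSeq_tolerance hY J).1 o γ hall⟩
  · intro i a b hab
    obtain ⟨j, hj⟩ := facesRel_tcClosure_iff.mp hab
    have := (tcSeq_tolerance hY j).2.1 i a b hj
    exact ⟨facesRel_tcClosure_iff.mpr ⟨j, this.1⟩, facesRel_tcClosure_iff.mpr ⟨j, this.2⟩⟩
  · intro i a b hab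
    obtain ⟨j, hj⟩ := facesRel_tcClosure_iff.mp hab
    exact facesRel_tcClosure_iff.mpr ⟨j, (tcSeq_tolerance hY j).2.2 i a b hj⟩

lemma tcClosure_strans (Y : Set (Cube (Fin n) A)) : STrans (tcClosure Y) := by
  intro i a b c hab hbc
  obtain ⟨j1, h1⟩ := facesRel_tcClosure_iff.mp hab
  obtain ⟨j2, h2⟩ := facesRel_tcClosure_iff.mp hbc
  have hn : 0 < n := Nat.pos_of_ne_zero (NeZero.ne n)
  set M := max j1 j2 with hM
  set K := i.val + n * (M + 1) with hK
  have hKmod : finMod n K = i := by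
    apply Fin.ext
    show K % n = i.val
    rw [hK, Nat.add_mul_mod_self_left, Nat.mod_eq_of_lt i.isLt]
  have hnM : n ≤ n * (M + 1) := Nat.le_mul_of_pos_right n (Nat.succ_pos M)
  have hMn : M + 1 ≤ n * (M + 1) := Nat.le_mul_of_pos_left (M + 1) hn
  have hK1 : 1 ≤ K := by omega
  have hKM : M ≤ K - 1 := by omega
  have hstep : tcSeq Y K = dirClosure i (tcSeq Y (K - 1)) := by
    have hKeq : K = (K - 1) + 1 := by omega
    rw [hKeq, tcSeq_succ, ← hKeq, hKmod]
  have h1' : (a, b) ∈ facesRel i (tcSeq Y (K - 1)) :=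
    facesRel_mono (tcSeq_mono Y (le_trans (le_max_left j1 j2) hKM)) h1
  have h2' : (b, c) ∈ facesRel i (tcSeq Y (K - 1)) :=
    facesRel_mono (tcSeq_mono Y (le_trans (le_max_right j1 j2) hKM)) h2
  have hac : (a, c) ∈ facesRel i (tcSeq Y K) := by
    rw [hstep, mem_facesRel_dirClosure]
    exact TransGen.tail (TransGen.single h1') h2'
  exact facesRel_tcClosure_iff.mpr ⟨K, hac⟩

lemma tcSeq_subset_hcong {X C : Set (Cube (Fin n) A)} (hC : IsHCongruence σ C)
    (hX : X ⊆ C) (j : ℕ) : tcSeq (tolGen σ X) j ⊆ C := by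
  induction j with
  | zero => exact dirClosure_subset_cong (tolGen_subset hC.1 hX) hC.2 _
  | succ j ih => exact dirClosure_subset_cong ih hC.2 _

end AuxStmt7f

/-- the generated higher-dimensional congruence is the iterated directional
transitive closure of the generated tolerance: `Θ_S(X) = tc(tol_S(X))`. -/
theorem stmt7 {A : Type u} (σ : Signature) [Alg σ A] (n : ℕ) [NeZero n]
    (X : Set (Cube (Fin n) A)) :
    congGen σ X = tcClosure (tolGen σ X) := by
  have hT : IsTolerance σ (tolGen σ X) := tolGen_tolerance X
  have hHC : IsHCongruence σ (tcClosure (tolGen σ X)) :=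
    ⟨tcClosure_tolerance hT, tcClosure_strans (tolGen σ X)⟩
  apply Set.Subset.antisymm
  · exact Set.sInter_subset_of_mem
      ⟨hHC, (subset_tolGen X).trans (subset_tcClosure (tolGen σ X))⟩
  · intro γ hγ
    refine Set.mem_sInter.mpr fun C hC => ?_
    obtain ⟨j, hj⟩ := Set.mem_iUnion.mp hγ
    exact tcSeq_subset_hcong hC.1 hC.2 j hj
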